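/- Let q ≤ −1 and let L_{−1,q,2} be the (|q|+5)×(|q|+5) linking matrix from the paper. The rational solution b of L_{−1,q,2} b = (1,1,0,…,0)ᵀ satisfies bᵀ L_{−1,q,2} b = 2|q|/(|q|+2). -/

import Mathlib

/-- The `(|q|+5) × (|q|+5)` linking matrix `L_{-1,q,2}` of the framed link
`𝕃_{-1,q,2}`: the two components of the `r = 2` family (rows 1–2), the two
components of the `p = -1` family (rows 3–4, forming the block `A₁`), and the
`|q|+1` components of the `q`-family (forming the block `A_{|q|}`); all components
of the `p`- and `q`-families link both `r`-components once. -/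
def L12mat (s : ℕ) : Matrix (Fin (s + 5)) (Fin (s + 5)) ℚ :=
  Matrix.of fun i j =>
    if (i : ℕ) ≤ 1 ∧ (j : ℕ) ≤ 1 then (if i = j then -3 else -2)
    else if (i : ℕ) ≤ 1 ∨ (j : ℕ) ≤ 1 then -1
    else if (i : ℕ) ≤ 3 ∧ (j : ℕ) ≤ 3 then (if i = j then 0 else -1)
    else if (i : ℕ) ≤ 3 ∨ (j : ℕ) ≤ 3 then 0
    else if i = j then 0 else -1

/-- The rational solution `b` of `L_{-1,q,2} b = (1,1,0,…,0)ᵀ`, namely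
`b = (|q|/(|q|+2), |q|/(|q|+2), -2|q|/(|q|+2), -2|q|/(|q|+2), -2/(|q|+2), …)`. -/
def b12vec (s : ℕ) : Fin (s + 5) → ℚ := fun i =>
  if (i : ℕ) ≤ 1 then (s : ℚ) / (s + 2)
  else if (i : ℕ) ≤ 3 then -(2 * s) / (s + 2)
  else -2 / (s + 2)

/-- The rotation vector `(1,1,0,…,0)`. -/
def rot12vec (s : ℕ) : Fin (s + 5) → ℚ := fun i => if (i : ℕ) ≤ 1 then 1 else 0

lemma sum_piece (s : ℕ) (a b c : ℚ) :
    ∑ j : Fin (s+5), (if (j:ℕ) ≤ 1 then a else if (j:ℕ) ≤ 3 then b else c)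
      = 2*a + 2*b + (s+1)*c := by
  rw [Fin.sum_univ_eq_sum_range (fun k => if k ≤ 1 then a else if k ≤ 3 then b else c)]
  induction s with
  | zero =>
    simp [Finset.sum_range_succ]; ring
  | succ n ih =>
    rw [show n+1+5 = (n+5)+1 from by ring, Finset.sum_range_succ, ih,
      if_neg (by omega), if_neg (by omega)]
    push_cast; ring

lemma sum_delta (n : ℕ) (i : Fin n) (e : ℚ) :
    ∑ j : Fin n, (if j = i then e else 0) = e := by
  simp

lemma sum_split (s : ℕ) (f : Fin (s+5) → ℚ) (a b c : ℚ) (i : Fin (s+5)) (e : ℚ)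
    (h : ∀ j, f j = (if (j:ℕ) ≤ 1 then a else if (j:ℕ) ≤ 3 then b else c)
        + (if j = i then e else 0)) :
    ∑ j, f j = 2*a + 2*b + (s+1)*c + e := by
  rw [Finset.sum_congr rfl (fun j _ => h j), Finset.sum_add_distrib, sum_piece, sum_delta]

lemma mulVec_eq (s : ℕ) : (L12mat s).mulVec (b12vec s) = rot12vec s := by
  have hd : (s:ℚ) + 2 ≠ 0 := by positivity
  funext i
  simp only [Matrix.mulVec, dotProduct]
  by_cases hi1 : (i:ℕ) ≤ 1
  · rw [sum_split s _ (-2*((s:ℚ)/(s+2))) (2*(s:ℚ)/(s+2)) (2/((s:ℚ)+2)) i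
      (-((s:ℚ)/(s+2))) ?_]
    · simp only [rot12vec, if_pos hi1]
      field_simp
      ring
    · intro j
      simp only [L12mat, b12vec, Matrix.of_apply]
      rcases eq_or_ne j i with rfl | hne
      · split_ifs <;> first | ring1 | (exfalso; omega)
      · rw [if_neg hne]
        have hne' : i ≠ j := fun h => hne h.symm
        simp only [if_neg hne']
        split_ifs <;> first | ring1 | (exfalso; omega)
  · by_cases hi3 : (i:ℕ) ≤ 3
    · rw [sum_split s _ (-((s:ℚ)/(s+2))) (2*(s:ℚ)/(s+2)) 0 i (-(2*(s:ℚ)/(s+2))) ?_]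
      · simp only [rot12vec, if_neg hi1]
        field_simp
        ring
      · intro j
        simp only [L12mat, b12vec, Matrix.of_apply]
        rcases eq_or_ne j i with rfl | hne
        · split_ifs <;> first | ring1 | (exfalso; omega)
        · rw [if_neg hne]
          have hne' : i ≠ j := fun h => hne h.symm
          simp only [if_neg hne']
          split_ifs <;> first | ring1 | (exfalso; omega)
    · rw [sum_split s _ (-((s:ℚ)/(s+2))) 0 (2/((s:ℚ)+2)) i (-(2/((s:ℚ)+2))) ?_]
      · simp only [rot12vec, if_neg hi1]
        field_simp
        ring
      · intro j
        simp only [L12mat, b12vec, Matrix.of_apply]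
        rcases eq_or_ne j i with rfl | hne
        · split_ifs <;> first | ring1 | (exfalso; omega)
        · rw [if_neg hne]
          have hne' : i ≠ j := fun h => hne h.symm
          simp only [if_neg hne']
          split_ifs <;> first | ring1 | (exfalso; omega)

/-- For `q ≤ -1`, the rational solution `b` of `L_{-1,q,2} b = (1,1,0,…,0)ᵀ`
satisfies `bᵀ L_{-1,q,2} b = 2|q|/(|q|+2)`. -/
theorem csquare_L_minusone_q_two (q : ℤ) (hq : q ≤ -1) :
    (L12mat q.natAbs).mulVec (b12vec q.natAbs) = rot12vec q.natAbs ∧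
      dotProduct (b12vec q.natAbs) ((L12mat q.natAbs).mulVec (b12vec q.natAbs)) =
        2 * (q.natAbs : ℚ) / ((q.natAbs : ℚ) + 2) := by
  set s := q.natAbs
  have hd : (s:ℚ) + 2 ≠ 0 := by positivity
  refine ⟨mulVec_eq s, ?_⟩
  rw [mulVec_eq s]
  simp only [dotProduct]
  have h : ∀ j : Fin (s+5), b12vec s j * rot12vec s j
      = (if (j:ℕ) ≤ 1 then (s:ℚ)/((s:ℚ)+2) else if (j:ℕ) ≤ 3 then 0 else 0) := by
    intro j
    simp only [b12vec, rot12vec]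
    split_ifs <;> ring
  rw [Finset.sum_congr rfl (fun j _ => h j), sum_piece]
  field_simp
  ring
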